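/- Let q ∈ [1,2] and let x, y ∈ ℝ with 1/2 ≤ y ≤ x ≤ 1. Then x^q (1 - y + q(1-x)(x-y)) ≥ 1 - y - (1-y²)(1-x). -/
import Mathlib

theorem aux_poly_stmt10 (u v s : ℝ) (hu : 0 ≤ u) (hv : 0 ≤ v) (huv : u + v ≤ 1/2)
    (hs0 : 0 ≤ s) (hs1 : s ≤ 1) :
    0 ≤ u^2*(1-u)^2*(1-s) + u^2*(1-u)^2*v*(1-s^2) + u*v*(1/2-u-v)
      + (1/2)*u*v*(1-2*u)*(3-2*u) := by
  have hs' : 0 ≤ 1 - s := by linarith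
  have h1 : 0 ≤ u^2*(1-u)^2*(1-s) := by positivity
  have h2 : 0 ≤ u^2*(1-u)^2*v*(1-s^2) := by
    have hs : 0 ≤ 1 - s^2 := by nlinarith
    positivity
  have h3 : 0 ≤ u*v*(1/2-u-v) := by
    apply mul_nonneg (mul_nonneg hu hv); linarith
  have h4 : 0 ≤ (1/2)*u*v*(1-2*u)*(3-2*u) := by
    have a1 : 0 ≤ 1-2*u := by linarith
    have a2 : 0 ≤ 3-2*u := by linarith
    positivity
  linarith

theorem stmt_10 (q : ℝ) (hq : q ∈ Set.Icc (1 : ℝ) 2) (x y : ℝ) (hy : 1 / 2 ≤ y)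
    (hyx : y ≤ x) (hx : x ≤ 1) :
    1 - y - (1 - y ^ 2) * (1 - x) ≤ x ^ q * (1 - y + q * (1 - x) * (x - y)) := by
  obtain ⟨hq1, hq2⟩ := hq
  have hx0 : (0:ℝ) < x := by linarith
  have hlog : Real.log x ≤ x - 1 := Real.log_le_sub_one_of_pos hx0
  have hkey : x ^ 2 * (1 + (2 - q) * (1 - x)) ≤ x ^ q := by
    have h1 : x ^ q = x ^ (2:ℝ) * x ^ (q - 2) := by
      rw [← Real.rpow_add hx0]; ring_nf
    have h2 : (1:ℝ) + (2 - q) * (1 - x) ≤ x ^ (q - 2) := by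
      rw [Real.rpow_def_of_pos hx0]
      have h3 := Real.add_one_le_exp (Real.log x * (q - 2))
      have h4 : (2 - q) * (1 - x) ≤ Real.log x * (q - 2) := by
        nlinarith [Real.log_nonpos (le_of_lt hx0) hx]
      linarith
    have h5 : x ^ (2:ℝ) = x ^ 2 := by
      rw [show (2:ℝ) = ((2:ℕ):ℝ) by norm_num, Real.rpow_natCast]
    rw [h1, h5]
    nlinarith [sq_nonneg x]
  have hA : (0:ℝ) ≤ 1 - y + q * (1 - x) * (x - y) := by
    have : (0:ℝ) ≤ q * (1 - x) * (x - y) := by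
      apply mul_nonneg (mul_nonneg (by linarith) (by linarith)); linarith
    linarith
  have h6 : x ^ 2 * (1 + (2 - q) * (1 - x)) * (1 - y + q * (1 - x) * (x - y)) ≤
      x ^ q * (1 - y + q * (1 - x) * (x - y)) :=
    mul_le_mul_of_nonneg_right hkey hA
  have haux := aux_poly_stmt10 (1 - x) (x - y) (q - 1) (by linarith) (by linarith)
    (by linarith) (by linarith) (by linarith)
  nlinarith [haux, h6]
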